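/- Let A and B be sesquilinear forms on a complex vector space H, with (λ, u, ũ) satisfying A(u,w) = λB(u,w) for all w ∈ H, A(ṽ,ũ) = λB(ṽ,ũ) for all ṽ ∈ H, and B(u,ũ) = 1; and let (λ_h, u_h, ũ_h) ∈ ℂ × H_h × H_h (H_h ⊆ H a subspace) satisfy A(u_h,w) = λ_h B(u_h,w) for all w ∈ H_h, A(ṽ,ũ_h) = λ_h B(ṽ,ũ_h) for all ṽ ∈ H_h, and B(u_h,ũ_h) = 1. Define residuals ρ(ṽ) = A(u_h,ṽ) − λ_h B(u_h,ṽ) and ρ̃(v) = A(v,ũ_h) − λ_h B(v,ũ_h), and σ = B(u − u_h, ũ − ũ_h)/2. Then for every v_h, ṽ_h ∈ H_h, (λ − λ_h)(1 − σ) = ½ρ(ũ − ṽ_h) + ½ρ̃(u − v_h). -/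
import Mathlib


/-- The dual-weighted-residual identity: with exact eigentriple `(lam, u, ut)` and
discrete eigentriple `(lamh, uh, uth)` (`ut`, `uth` are the left eigenfunctions),
`(λ − λ_h)(1 − σ) = ½ρ(ũ − ṽ_h) + ½ρ̃(u − v_h)` for all `v_h, ṽ_h ∈ H_h`,
where `σ = B(u − u_h, ũ − ũ_h)/2`. -/
theorem stmt_6 {H : Type*} [AddCommGroup H] [Module ℂ H]
    (A B : H →ₗ[ℂ] H →ₗ⋆[ℂ] ℂ) (Hh : Submodule ℂ H)
    (lam lamh : ℂ) (u ut uh uth : H)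
    (huh : uh ∈ Hh) (huth : uth ∈ Hh)
    (h1 : ∀ w : H, A u w = lam * B u w)
    (h2 : ∀ vt : H, A vt ut = lam * B vt ut)
    (h3 : B u ut = 1)
    (h4 : ∀ w ∈ Hh, A uh w = lamh * B uh w)
    (h5 : ∀ vt ∈ Hh, A vt uth = lamh * B vt uth)
    (h6 : B uh uth = 1) :
    ∀ vh ∈ Hh, ∀ vth ∈ Hh,
      (lam - lamh) * (1 - B (u - uh) (ut - uth) / 2)
        = (A uh (ut - vth) - lamh * B uh (ut - vth)) / 2
          + (A (u - vh) uth - lamh * B (u - vh) uth) / 2 := by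
  intro vh hvh vth hvth
  have e1 := h2 uh
  have e2 := h4 vth hvth
  have e3 := h1 uth
  have e4 := h5 vh hvh
  simp only [map_sub, LinearMap.sub_apply]
  linear_combination -e1/2 - e3/2 + e2/2 + e4/2 + (lamh - lam)/2 * h3 + (lamh - lam)/2 * h6
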